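/- Let G be a connected, 5-regular, 3-sparse graph that is not isomorphic to K_{6,6} minus a perfect matching. Then G contains either a reducible edge (an edge contained in at least one and at most two triangles) or a reducible vertex-pair (two non-adjacent vertices having at least one and at most three common neighbours). -/

import Mathlib

open Finset

variable {V : Type*} [Fintype V] [DecidableEq V]

/-- `i(X)`: the number of edges of `G` with both endpoints in `X`. -/
def edgesWithin (G : SimpleGraph V) [DecidableRel G.Adj] (X : Finset V) : ℕ :=
  ((X ×ˢ X).filter fun p => G.Adj p.1 p.2).card / 2

/-- `d(X,Y)`: the number of edges of `G` with one endpoint in `X \ Y` and the other in `Y \ X`. -/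
def edgesBetween (G : SimpleGraph V) [DecidableRel G.Adj] (X Y : Finset V) : ℕ :=
  (((X \ Y) ×ˢ (Y \ X)).filter fun p => G.Adj p.1 p.2).card

/-- `G` is 3-sparse: `i(X) ≤ 3|X| - 6` for all `X` with `|X| ≥ 3`. -/
def Sparse3 (G : SimpleGraph V) [DecidableRel G.Adj] : Prop :=
  ∀ X : Finset V, 3 ≤ X.card → edgesWithin G X + 6 ≤ 3 * X.card

/-- The set of common neighbours of `u` and `v`. -/
def commonNbrs (G : SimpleGraph V) [DecidableRel G.Adj] (u v : V) : Finset V :=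
  Finset.univ.filter fun t => G.Adj u t ∧ G.Adj v t

/-- K_{6,6} minus a perfect matching: vertices (s, i) with s the side;
(s,i) and (t,j) are adjacent iff they are on different sides and i ≠ j. -/
def K66minus : SimpleGraph (Fin 2 × Fin 6) where
  Adj a b := a.1 ≠ b.1 ∧ a.2 ≠ b.2
  symm := ⟨fun a b h => ⟨h.1.symm, h.2.symm⟩⟩
  loopless := ⟨fun a h => h.1 rfl⟩


set_option linter.unusedSectionVars false

namespace Aux

variable (G : SimpleGraph V) [DecidableRel G.Adj]

lemma mem_commonNbrs {u v t : V} : t ∈ commonNbrs G u v ↔ G.Adj u t ∧ G.Adj v t := by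
  simp [commonNbrs]

lemma two_mul_edgesWithin (G : SimpleGraph V) [DecidableRel G.Adj] (X : Finset V) :
    2 * edgesWithin G X = ∑ x ∈ X, (X.filter (G.Adj x)).card := by
  classical
  have hsum : ((X ×ˢ X).filter fun p => G.Adj p.1 p.2).card
      = ∑ x ∈ X, (X.filter (G.Adj x)).card := by
    rw [Finset.card_filter, Finset.sum_product]
    exact Finset.sum_congr rfl fun x _ => (Finset.card_filter _ _).symm
  have heven : Even ((X ×ˢ X).filter fun p => G.Adj p.1 p.2).card := by
    set S := (X ×ˢ X).filter fun p => G.Adj p.1 p.2 with hS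
    let g := Fintype.equivFin V
    have hmemS : ∀ p : V × V, p ∈ S → p.swap ∈ S := by
      intro p hp
      simp only [hS, Finset.mem_filter, Finset.mem_product] at hp ⊢
      exact ⟨⟨hp.1.2, hp.1.1⟩, hp.2.symm⟩
    have hsplit := Finset.card_filter_add_card_filter_not
      (s := S) (p := fun p => g p.1 < g p.2)
    have hbij : (S.filter fun p => g p.1 < g p.2).card
        = (S.filter fun p => ¬ g p.1 < g p.2).card := by
      refine Finset.card_bij' (fun p _ => p.swap) (fun p _ => p.swap) ?_ ?_ ?_ ?_
      · intro p hp
        rw [Finset.mem_filter] at hp ⊢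
        refine ⟨hmemS p hp.1, ?_⟩
        have := hp.2
        simp only [Prod.fst_swap, Prod.snd_swap]
        omega
      · intro p hp
        rw [Finset.mem_filter] at hp ⊢
        have hadj : G.Adj p.1 p.2 := by
          have := hp.1; rw [hS, Finset.mem_filter] at this; exact this.2
        have hne : g p.1 ≠ g p.2 := fun h => G.ne_of_adj hadj (g.injective h)
        refine ⟨hmemS p hp.1, ?_⟩
        have := hp.2
        simp only [Prod.fst_swap, Prod.snd_swap]
        omega
      · intro p _; simp
      · intro p _; simp
    exact ⟨(S.filter fun p => g p.1 < g p.2).card, by omega⟩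
  obtain ⟨k, hk⟩ := heven
  simp only [edgesWithin, ← hsum, hk]
  omega

lemma row_ge {X S : Finset V} {x : V} (hS : ∀ y ∈ S, y ∈ X ∧ G.Adj x y) :
    S.card ≤ (X.filter (G.Adj x)).card :=
  Finset.card_le_card fun y hy => Finset.mem_filter.2 ⟨(hS y hy).1, (hS y hy).2⟩

lemma common_lower
    (hE : ∀ x y, G.Adj x y → (commonNbrs G x y).card = 0 ∨ 3 ≤ (commonNbrs G x y).card)
    (x w c : V) (S : Finset V)
    (hN : ∀ t, G.Adj x t → t = c ∨ t = w ∨ t ∈ S)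
    (hxw : G.Adj x w) (hxc : G.Adj x c) (hwc : G.Adj w c) (hcS : c ∉ S) :
    2 ≤ (S.filter (fun y => G.Adj w y)).card := by
  have hcm : c ∈ commonNbrs G x w := (mem_commonNbrs G).2 ⟨hxc, hwc⟩
  have h3 : 3 ≤ (commonNbrs G x w).card := by
    rcases hE x w hxw with h | h
    · exact absurd h (Finset.card_ne_zero_of_mem hcm)
    · exact h
  have hsub : commonNbrs G x w ⊆ insert c (S.filter (fun y => G.Adj w y)) := by
    intro t ht
    obtain ⟨hxt, hwt⟩ := (mem_commonNbrs G).1 ht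
    rcases hN t hxt with rfl | rfl | hS
    · exact Finset.mem_insert_self _ _
    · exact absurd hwt (G.irrefl)
    · exact Finset.mem_insert_of_mem (Finset.mem_filter.2 ⟨hS, hwt⟩)
  have h1 := Finset.card_le_card hsub
  have h2 := Finset.card_insert_le c (S.filter (fun y => G.Adj w y))
  omega

lemma finalPair
    (hP : ∀ x y, x ≠ y → ¬ G.Adj x y → (commonNbrs G x y).card = 0 ∨ 4 ≤ (commonNbrs G x y).card)
    {u v a b wc wp wq : V}
    (hNv : ∀ t, G.Adj v t → t = u ∨ t = wc ∨ t = wp ∨ t = wq ∨ t = b)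
    (hau : G.Adj a u) (huv : G.Adj u v) (hav : ¬ G.Adj a v) (hane : a ≠ v)
    (hac : ¬ G.Adj a wc) (hab : ¬ G.Adj a b) : False := by
  have hmemu : u ∈ commonNbrs G a v := (mem_commonNbrs G).2 ⟨hau, huv.symm⟩
  have hsub : commonNbrs G a v ⊆ {u, wp, wq} := by
    intro t ht
    obtain ⟨hat, hvt⟩ := (mem_commonNbrs G).1 ht
    rcases hNv t hvt with rfl | rfl | rfl | rfl | rfl
    · exact Finset.mem_insert_self _ _
    · exact absurd hat hac
    · simp
    · simp
    · exact absurd hat hab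
  have h1 : 1 ≤ (commonNbrs G a v).card := Finset.card_pos.2 ⟨u, hmemu⟩
  have h3 : (commonNbrs G a v).card ≤ 3 := by
    refine le_trans (Finset.card_le_card hsub) ?_
    have h4 := Finset.card_insert_le u ({wp, wq} : Finset V)
    have h5 := Finset.card_insert_le wp ({wq} : Finset V)
    simp only [Finset.card_singleton] at h5
    omega
  rcases hP a v hane hav with h | h <;> omega

lemma caseB4 (hreg : ∀ v, G.degree v = 5) (hsp : Sparse3 G)
    (hE : ∀ x y, G.Adj x y → (commonNbrs G x y).card = 0 ∨ 3 ≤ (commonNbrs G x y).card)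
    {u v : V} (huv : G.Adj u v) (h4 : (commonNbrs G u v).card = 4) : False := by
  classical
  set W := commonNbrs G u v with hWdef
  have hWmem : ∀ t ∈ W, G.Adj u t ∧ G.Adj v t := fun t ht => (mem_commonNbrs G).1 ht
  have huW : u ∉ W := fun h => G.irrefl ((hWmem u h).1)
  have hvW : v ∉ W := fun h => G.irrefl ((hWmem v h).2)
  have hune : u ≠ v := G.ne_of_adj huv
  have hNu : G.neighborFinset u = insert v W := by
    symm
    apply Finset.eq_of_subset_of_card_le
    · intro t ht
      rw [SimpleGraph.mem_neighborFinset]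
      rcases Finset.mem_insert.1 ht with rfl | htW
      · exact huv
      · exact (hWmem t htW).1
    · rw [G.card_neighborFinset_eq_degree, hreg u, Finset.card_insert_of_notMem hvW, h4]
  set X := insert u (insert v W) with hX
  have huX : u ∉ insert v W := by
    simp only [Finset.mem_insert]
    rintro (rfl | h) <;> [exact hune rfl; exact huW h]
  have hcardX : X.card = 6 := by
    rw [hX, Finset.card_insert_of_notMem huX, Finset.card_insert_of_notMem hvW, h4]
  have hsp6 := hsp X (by omega)
  have key : 26 ≤ 2 * edgesWithin G X := by
    rw [two_mul_edgesWithin]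
    rw [hX, Finset.sum_insert huX, Finset.sum_insert hvW]
    have hu5 : 5 ≤ ((insert u (insert v W)).filter (G.Adj u)).card := by
      apply le_trans _ (row_ge G (S := insert v W) ?_)
      · rw [Finset.card_insert_of_notMem hvW, h4]
      · intro y hy
        refine ⟨Finset.mem_insert_of_mem hy, ?_⟩
        rcases Finset.mem_insert.1 hy with rfl | h
        · exact huv
        · exact (hWmem y h).1
    have hv5 : 5 ≤ ((insert u (insert v W)).filter (G.Adj v)).card := by
      apply le_trans _ (row_ge G (S := insert u W) ?_)
      · rw [Finset.card_insert_of_notMem huW, h4]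
      · intro y hy
        rcases Finset.mem_insert.1 hy with rfl | h
        · exact ⟨Finset.mem_insert_self _ _, huv.symm⟩
        · exact ⟨Finset.mem_insert_of_mem (Finset.mem_insert_of_mem h), (hWmem y h).2⟩
    have hw4 : ∀ w ∈ W, 4 ≤ ((insert u (insert v W)).filter (G.Adj w)).card := by
      intro w hw
      obtain ⟨huw, hvw⟩ := hWmem w hw
      have hvmem : v ∈ commonNbrs G u w := (mem_commonNbrs G).2 ⟨huv, hvw.symm⟩
      have h3 : 3 ≤ (commonNbrs G u w).card := by
        rcases hE u w huw with h | h
        · exact absurd h (Finset.card_ne_zero_of_mem hvmem)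
        · exact h
      have hsub : commonNbrs G u w ⊆ insert v (W.filter (G.Adj w)) := by
        intro t ht
        obtain ⟨hut, hwt⟩ := (mem_commonNbrs G).1 ht
        have htW : t ∈ insert v W := by
          rw [← hNu, SimpleGraph.mem_neighborFinset]; exact hut
        rcases Finset.mem_insert.1 htW with rfl | htW
        · exact Finset.mem_insert_self _ _
        · exact Finset.mem_insert_of_mem (Finset.mem_filter.2 ⟨htW, hwt⟩)
      have hfil2 : 2 ≤ (W.filter (G.Adj w)).card := by
        have h1 := Finset.card_le_card hsub
        have h2 := Finset.card_insert_le v (W.filter (G.Adj w))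
        omega
      apply le_trans _ (row_ge G (S := insert u (insert v (W.filter (G.Adj w)))) ?_)
      · have hvf : v ∉ W.filter (G.Adj w) := fun h => hvW (Finset.mem_filter.1 h).1
        have huf : u ∉ insert v (W.filter (G.Adj w)) := by
          simp only [Finset.mem_insert]
          rintro (rfl | h) <;> [exact hune rfl; exact huW (Finset.mem_filter.1 h).1]
        rw [Finset.card_insert_of_notMem huf, Finset.card_insert_of_notMem hvf]
        omega
      · intro y hy
        rcases Finset.mem_insert.1 hy with rfl | hy
        · exact ⟨Finset.mem_insert_self _ _, huw.symm⟩
        rcases Finset.mem_insert.1 hy with rfl | hy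
        · exact ⟨Finset.mem_insert_of_mem (Finset.mem_insert_self _ _), hvw.symm⟩
        · obtain ⟨hyW, hwy⟩ := Finset.mem_filter.1 hy
          exact ⟨Finset.mem_insert_of_mem (Finset.mem_insert_of_mem hyW), hwy⟩
    have hsumW : 16 ≤ ∑ w ∈ W, ((insert u (insert v W)).filter (G.Adj w)).card := by
      calc (16 : ℕ) = W.card * 4 := by rw [h4]
      _ ≤ _ := by
        rw [← Finset.sum_const_nat (m := 4) (fun x _ => rfl)]
        exact Finset.sum_le_sum hw4
    omega
  omega

set_option maxHeartbeats 1000000 in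
lemma caseB3 (hreg : ∀ v, G.degree v = 5) (hsp : Sparse3 G)
    (hE : ∀ x y, G.Adj x y → (commonNbrs G x y).card = 0 ∨ 3 ≤ (commonNbrs G x y).card)
    (hP : ∀ x y, x ≠ y → ¬ G.Adj x y → (commonNbrs G x y).card = 0 ∨ 4 ≤ (commonNbrs G x y).card)
    {u v : V} (huv : G.Adj u v) (h3 : (commonNbrs G u v).card = 3) : False := by
  classical
  obtain ⟨w1, w2, w3, h12, h13, h23, hW⟩ := Finset.card_eq_three.1 h3
  have hWmem : ∀ t ∈ commonNbrs G u v, G.Adj u t ∧ G.Adj v t :=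
    fun t ht => (mem_commonNbrs G).1 ht
  have hmem1 : w1 ∈ commonNbrs G u v := by rw [hW]; simp
  have hmem2 : w2 ∈ commonNbrs G u v := by rw [hW]; simp
  have hmem3 : w3 ∈ commonNbrs G u v := by rw [hW]; simp
  obtain ⟨hu1, hv1⟩ := hWmem _ hmem1
  obtain ⟨hu2, hv2⟩ := hWmem _ hmem2
  obtain ⟨hu3, hv3⟩ := hWmem _ hmem3
  have hune : u ≠ v := G.ne_of_adj huv
  have huw1 : u ≠ w1 := fun h => G.irrefl (h ▸ hu1)
  have huw2 : u ≠ w2 := fun h => G.irrefl (h ▸ hu2)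
  have huw3 : u ≠ w3 := fun h => G.irrefl (h ▸ hu3)
  have hvw1 : v ≠ w1 := fun h => G.irrefl (h ▸ hv1)
  have hvw2 : v ≠ w2 := fun h => G.irrefl (h ▸ hv2)
  have hvw3 : v ≠ w3 := fun h => G.irrefl (h ▸ hv3)
  -- find a, the fifth neighbour of u
  have hsubu : ({v, w1, w2, w3} : Finset V) ⊆ G.neighborFinset u := by
    intro t ht
    rw [SimpleGraph.mem_neighborFinset]
    simp only [Finset.mem_insert, Finset.mem_singleton] at ht
    rcases ht with rfl | rfl | rfl | rfl
    exacts [huv, hu1, hu2, hu3]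
  have hcard4u : ({v, w1, w2, w3} : Finset V).card = 4 := by
    rw [Finset.card_insert_of_notMem (by simp [hvw1, hvw2, hvw3]),
      Finset.card_insert_of_notMem (by simp [h12, h13]),
      Finset.card_insert_of_notMem (by simp [h23]), Finset.card_singleton]
  have hNucard : (G.neighborFinset u).card = 5 := by
    rw [G.card_neighborFinset_eq_degree, hreg u]
  have hexa : (G.neighborFinset u \ {v, w1, w2, w3}).Nonempty := by
    rw [← Finset.card_pos, Finset.card_sdiff_of_subset hsubu, hNucard, hcard4u]; omega
  obtain ⟨a, ha⟩ := hexa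
  obtain ⟨haN, hanot⟩ := Finset.mem_sdiff.1 ha
  have hua : G.Adj u a := (SimpleGraph.mem_neighborFinset _ _ _).1 haN
  simp only [Finset.mem_insert, Finset.mem_singleton, not_or] at hanot
  obtain ⟨hav', haw1', haw2', haw3'⟩ := hanot
  have hva2 : v ≠ a := fun h => hav' h.symm
  have hw1a : w1 ≠ a := fun h => haw1' h.symm
  have hw2a : w2 ≠ a := fun h => haw2' h.symm
  have hw3a : w3 ≠ a := fun h => haw3' h.symm
  have hNu : G.neighborFinset u = insert v (insert w1 (insert w2 (insert w3 {a}))) := by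
    symm
    apply Finset.eq_of_subset_of_card_le
    · intro t ht
      simp only [Finset.mem_insert, Finset.mem_singleton] at ht
      rw [SimpleGraph.mem_neighborFinset]
      rcases ht with rfl | rfl | rfl | rfl | rfl
      exacts [huv, hu1, hu2, hu3, hua]
    · rw [hNucard]
      rw [Finset.card_insert_of_notMem (by simp [hvw1, hvw2, hvw3, hva2]),
        Finset.card_insert_of_notMem (by simp [h12, h13, hw1a]),
        Finset.card_insert_of_notMem (by simp [h23, hw2a]),
        Finset.card_insert_of_notMem (by simp [hw3a]), Finset.card_singleton]
  -- find b, the fifth neighbour of v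
  have hsubv : ({u, w1, w2, w3} : Finset V) ⊆ G.neighborFinset v := by
    intro t ht
    rw [SimpleGraph.mem_neighborFinset]
    simp only [Finset.mem_insert, Finset.mem_singleton] at ht
    rcases ht with rfl | rfl | rfl | rfl
    exacts [huv.symm, hv1, hv2, hv3]
  have hcard4v : ({u, w1, w2, w3} : Finset V).card = 4 := by
    rw [Finset.card_insert_of_notMem (by simp [huw1, huw2, huw3]),
      Finset.card_insert_of_notMem (by simp [h12, h13]),
      Finset.card_insert_of_notMem (by simp [h23]), Finset.card_singleton]
  have hNvcard : (G.neighborFinset v).card = 5 := by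
    rw [G.card_neighborFinset_eq_degree, hreg v]
  have hexb : (G.neighborFinset v \ {u, w1, w2, w3}).Nonempty := by
    rw [← Finset.card_pos, Finset.card_sdiff_of_subset hsubv, hNvcard, hcard4v]; omega
  obtain ⟨b, hb⟩ := hexb
  obtain ⟨hbN, hbnot⟩ := Finset.mem_sdiff.1 hb
  have hvb : G.Adj v b := (SimpleGraph.mem_neighborFinset _ _ _).1 hbN
  simp only [Finset.mem_insert, Finset.mem_singleton, not_or] at hbnot
  obtain ⟨hbu', hbw1', hbw2', hbw3'⟩ := hbnot
  have hub2 : u ≠ b := fun h => hbu' h.symm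
  have hw1b : w1 ≠ b := fun h => hbw1' h.symm
  have hw2b : w2 ≠ b := fun h => hbw2' h.symm
  have hw3b : w3 ≠ b := fun h => hbw3' h.symm
  have hNv : G.neighborFinset v = insert u (insert w1 (insert w2 (insert w3 {b}))) := by
    symm
    apply Finset.eq_of_subset_of_card_le
    · intro t ht
      simp only [Finset.mem_insert, Finset.mem_singleton] at ht
      rw [SimpleGraph.mem_neighborFinset]
      rcases ht with rfl | rfl | rfl | rfl | rfl
      exacts [huv.symm, hv1, hv2, hv3, hvb]
    · rw [hNvcard]
      rw [Finset.card_insert_of_notMem (by simp [huw1, huw2, huw3, hub2]),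
        Finset.card_insert_of_notMem (by simp [h12, h13, hw1b]),
        Finset.card_insert_of_notMem (by simp [h23, hw2b]),
        Finset.card_insert_of_notMem (by simp [hw3b]), Finset.card_singleton]
  -- more adjacency / distinctness facts
  have hav : ¬ G.Adj v a := by
    intro h
    have : a ∈ commonNbrs G u v := (mem_commonNbrs G).2 ⟨hua, h⟩
    rw [hW] at this
    simp only [Finset.mem_insert, Finset.mem_singleton] at this
    rcases this with rfl | rfl | rfl
    exacts [haw1' rfl, haw2' rfl, haw3' rfl]
  have hub : ¬ G.Adj u b := by
    intro h
    have : b ∈ commonNbrs G u v := (mem_commonNbrs G).2 ⟨h, hvb⟩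
    rw [hW] at this
    simp only [Finset.mem_insert, Finset.mem_singleton] at this
    rcases this with rfl | rfl | rfl
    exacts [hbw1' rfl, hbw2' rfl, hbw3' rfl]
  have hau' : u ≠ a := fun h => G.irrefl (h ▸ hua)
  have hbv' : v ≠ b := fun h => G.irrefl (h ▸ hvb)
  have habne : a ≠ b := by
    intro h
    exact hav (h ▸ hvb)
  -- neighbourhoods as ∀-characterisations
  have hNu' : ∀ t, G.Adj u t → t = v ∨ t = w1 ∨ t = w2 ∨ t = w3 ∨ t = a := by
    intro t ht
    have : t ∈ G.neighborFinset u := (SimpleGraph.mem_neighborFinset _ _ _).2 ht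
    rw [hNu] at this
    simpa using this
  have hNv' : ∀ t, G.Adj v t → t = u ∨ t = w1 ∨ t = w2 ∨ t = w3 ∨ t = b := by
    intro t ht
    have : t ∈ G.neighborFinset v := (SimpleGraph.mem_neighborFinset _ _ _).2 ht
    rw [hNv] at this
    simpa using this
  have hav2r : ¬ G.Adj a v := fun h => hav h.symm
  have hub2r : ¬ G.Adj b u := fun h => hub h.symm
  have hcom : ∀ x y : V, (if G.Adj x y then (1:ℕ) else 0) = (if G.Adj y x then 1 else 0) := by
    intro x y
    by_cases h : G.Adj x y
    · rw [if_pos h, if_pos h.symm]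
    · rw [if_neg h, if_neg (fun h' => h h'.symm)]
  -- the six lower-bound constraints
  have hC1a : 2 ≤ (({w2, w3, a} : Finset V).filter (fun y => G.Adj w1 y)).card := by
    refine common_lower G hE u w1 v {w2, w3, a} ?_ hu1 huv hv1.symm (by simp [hvw2, hvw3, hva2])
    intro t ht
    rcases hNu' t ht with h | h | h | h | h <;> simp [h]
  have hC2a : 2 ≤ (({w1, w3, a} : Finset V).filter (fun y => G.Adj w2 y)).card := by
    refine common_lower G hE u w2 v {w1, w3, a} ?_ hu2 huv hv2.symm (by simp [hvw1, hvw3, hva2])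
    intro t ht
    rcases hNu' t ht with h | h | h | h | h <;> simp [h]
  have hC3a : 2 ≤ (({w1, w2, a} : Finset V).filter (fun y => G.Adj w3 y)).card := by
    refine common_lower G hE u w3 v {w1, w2, a} ?_ hu3 huv hv3.symm (by simp [hvw1, hvw2, hva2])
    intro t ht
    rcases hNu' t ht with h | h | h | h | h <;> simp [h]
  have hC1b : 2 ≤ (({w2, w3, b} : Finset V).filter (fun y => G.Adj w1 y)).card := by
    refine common_lower G hE v w1 u {w2, w3, b} ?_ hv1 huv.symm hu1.symm (by simp [huw2, huw3, hub2])
    intro t ht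
    rcases hNv' t ht with h | h | h | h | h <;> simp [h]
  have hC2b : 2 ≤ (({w1, w3, b} : Finset V).filter (fun y => G.Adj w2 y)).card := by
    refine common_lower G hE v w2 u {w1, w3, b} ?_ hv2 huv.symm hu2.symm (by simp [huw1, huw3, hub2])
    intro t ht
    rcases hNv' t ht with h | h | h | h | h <;> simp [h]
  have hC3b : 2 ≤ (({w1, w2, b} : Finset V).filter (fun y => G.Adj w3 y)).card := by
    refine common_lower G hE v w3 u {w1, w2, b} ?_ hv3 huv.symm hu3.symm (by simp [huw1, huw2, hub2])
    intro t ht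
    rcases hNv' t ht with h | h | h | h | h <;> simp [h]
  rw [Finset.card_filter, Finset.sum_insert (by simp [h23, hw2a]),
    Finset.sum_insert (by simp [hw3a]), Finset.sum_singleton] at hC1a
  rw [Finset.card_filter, Finset.sum_insert (by simp [h13, hw1a]),
    Finset.sum_insert (by simp [hw3a]), Finset.sum_singleton, hcom w2 w1] at hC2a
  rw [Finset.card_filter, Finset.sum_insert (by simp [h12, hw1a]),
    Finset.sum_insert (by simp [hw2a]), Finset.sum_singleton, hcom w3 w1, hcom w3 w2] at hC3a
  rw [Finset.card_filter, Finset.sum_insert (by simp [h23, hw2b]),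
    Finset.sum_insert (by simp [hw3b]), Finset.sum_singleton] at hC1b
  rw [Finset.card_filter, Finset.sum_insert (by simp [h13, hw1b]),
    Finset.sum_insert (by simp [hw3b]), Finset.sum_singleton, hcom w2 w1] at hC2b
  rw [Finset.card_filter, Finset.sum_insert (by simp [h12, hw1b]),
    Finset.sum_insert (by simp [hw2b]), Finset.sum_singleton, hcom w3 w1, hcom w3 w2] at hC3b
  -- sparsity on the 5-set
  set X5 : Finset V := insert u (insert v (insert w1 (insert w2 ({w3} : Finset V)))) with hX5
  have hX5card : X5.card = 5 := by
    rw [hX5, Finset.card_insert_of_notMem (by simp [hune, huw1, huw2, huw3]),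
      Finset.card_insert_of_notMem (by simp [hvw1, hvw2, hvw3]),
      Finset.card_insert_of_notMem (by simp [h12, h13]),
      Finset.card_insert_of_notMem (by simp [h23]), Finset.card_singleton]
  have hsum5 : ∀ f : V → ℕ, ∑ y ∈ X5, f y = f u + f v + f w1 + f w2 + f w3 := by
    intro f
    rw [hX5, Finset.sum_insert (by simp [hune, huw1, huw2, huw3]),
      Finset.sum_insert (by simp [hvw1, hvw2, hvw3]),
      Finset.sum_insert (by simp [h12, h13]),
      Finset.sum_insert (by simp [h23]), Finset.sum_singleton]
    ring
  have hsp5 := hsp X5 (by omega)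
  have h2e5 := two_mul_edgesWithin G X5
  rw [hsum5] at h2e5
  simp only [Finset.card_filter, hsum5] at h2e5
  simp only [huv, hu1, hu2, hu3, hv1, hv2, hv3, huv.symm, hu1.symm, hu2.symm, hu3.symm,
    hv1.symm, hv2.symm, hv3.symm, SimpleGraph.irrefl, if_true, if_false] at h2e5
  rw [hcom w2 w1, hcom w3 w1, hcom w3 w2] at h2e5
  -- sparsity on the 7-set
  set X7 : Finset V := insert u (insert v (insert w1 (insert w2 (insert w3
    (insert a ({b} : Finset V)))))) with hX7
  have hX7card : X7.card = 7 := by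
    rw [hX7, Finset.card_insert_of_notMem (by simp [hune, huw1, huw2, huw3, hau', hub2]),
      Finset.card_insert_of_notMem (by simp [hvw1, hvw2, hvw3, hva2, hbv']),
      Finset.card_insert_of_notMem (by simp [h12, h13, hw1a, hw1b]),
      Finset.card_insert_of_notMem (by simp [h23, hw2a, hw2b]),
      Finset.card_insert_of_notMem (by simp [hw3a, hw3b]),
      Finset.card_insert_of_notMem (by simp [habne]), Finset.card_singleton]
  have hsum7 : ∀ f : V → ℕ,
      ∑ y ∈ X7, f y = f u + f v + f w1 + f w2 + f w3 + f a + f b := by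
    intro f
    rw [hX7, Finset.sum_insert (by simp [hune, huw1, huw2, huw3, hau', hub2]),
      Finset.sum_insert (by simp [hvw1, hvw2, hvw3, hva2, hbv']),
      Finset.sum_insert (by simp [h12, h13, hw1a, hw1b]),
      Finset.sum_insert (by simp [h23, hw2a, hw2b]),
      Finset.sum_insert (by simp [hw3a, hw3b]),
      Finset.sum_insert (by simp [habne]), Finset.sum_singleton]
    ring
  have hsp7 := hsp X7 (by omega)
  have h2e7 := two_mul_edgesWithin G X7
  rw [hsum7] at h2e7
  simp only [Finset.card_filter, hsum7] at h2e7
  simp only [huv, hu1, hu2, hu3, hv1, hv2, hv3, huv.symm, hu1.symm, hu2.symm, hu3.symm,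
    hv1.symm, hv2.symm, hv3.symm, hua, hua.symm, hvb, hvb.symm, hav, hav2r, hub, hub2r,
    SimpleGraph.irrefl, if_true, if_false] at h2e7
  rw [hcom w2 w1, hcom w3 w1, hcom w3 w2, hcom a w1, hcom a w2, hcom a w3,
    hcom b w1, hcom b w2, hcom b w3, hcom b a] at h2e7
  -- bounds on the indicator atoms
  have hble : ∀ x y : V, (if G.Adj x y then (1:ℕ) else 0) ≤ 1 := by
    intro x y; split <;> omega
  have hb12 := hble w1 w2
  have hb13 := hble w1 w3
  have hb23 := hble w2 w3
  have hba1 := hble w1 a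
  have hba2 := hble w2 a
  have hba3 := hble w3 a
  have hbb1 := hble w1 b
  have hbb2 := hble w2 b
  have hbb3 := hble w3 b
  have hbab := hble a b
  -- the structural pattern
  have hpat : ((if G.Adj w1 w2 then (1:ℕ) else 0) = 0 ∧ (if G.Adj w3 a then (1:ℕ) else 0) = 0
        ∧ (if G.Adj a b then (1:ℕ) else 0) = 0)
      ∨ ((if G.Adj w1 w3 then (1:ℕ) else 0) = 0 ∧ (if G.Adj w2 a then (1:ℕ) else 0) = 0
        ∧ (if G.Adj a b then (1:ℕ) else 0) = 0)
      ∨ ((if G.Adj w2 w3 then (1:ℕ) else 0) = 0 ∧ (if G.Adj w1 a then (1:ℕ) else 0) = 0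
        ∧ (if G.Adj a b then (1:ℕ) else 0) = 0) := by
    omega
  have hexf : ∀ {x y : V}, (if G.Adj x y then (1:ℕ) else 0) = 0 → ¬ G.Adj x y := by
    intro x y h hadj
    rw [if_pos hadj] at h
    omega
  rcases hpat with ⟨h1, h2, h3⟩ | ⟨h1, h2, h3⟩ | ⟨h1, h2, h3⟩
  · exact finalPair G hP (u := u) (v := v) (a := a) (b := b) (wc := w3) (wp := w1) (wq := w2)
      (fun t ht => by rcases hNv' t ht with h | h | h | h | h <;> simp [h])
      hua.symm huv hav2r hav' (fun h => hexf h2 h.symm) (hexf h3)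
  · exact finalPair G hP (u := u) (v := v) (a := a) (b := b) (wc := w2) (wp := w1) (wq := w3)
      (fun t ht => by rcases hNv' t ht with h | h | h | h | h <;> simp [h])
      hua.symm huv hav2r hav' (fun h => hexf h2 h.symm) (hexf h3)
  · exact finalPair G hP (u := u) (v := v) (a := a) (b := b) (wc := w1) (wp := w2) (wq := w3)
      (fun t ht => by rcases hNv' t ht with h | h | h | h | h <;> simp [h])
      hua.symm huv hav2r hav' (fun h => hexf h2 h.symm) (hexf h3)

set_option maxHeartbeats 1000000 in
lemma caseA (hconn : G.Connected) (hreg : ∀ v, G.degree v = 5) (hsp : Sparse3 G)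
    (htf : ∀ x y, G.Adj x y → (commonNbrs G x y).card = 0)
    (hP : ∀ x y, x ≠ y → ¬ G.Adj x y → (commonNbrs G x y).card = 0 ∨ 4 ≤ (commonNbrs G x y).card) :
    Nonempty (G ≃g K66minus) := by
  classical
  have htri : ∀ x y t : V, G.Adj x y → G.Adj x t → G.Adj y t → False := by
    intro x y t hxy hxt hyt
    have hm : t ∈ commonNbrs G x y := (mem_commonNbrs G).2 ⟨hxt, hyt⟩
    exact (Finset.card_ne_zero_of_mem hm) (htf x y hxy)
  obtain ⟨v⟩ := hconn.nonempty
  set N := G.neighborFinset v with hN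
  have hN5 : N.card = 5 := by rw [hN, G.card_neighborFinset_eq_degree, hreg]
  have hNdeg : ∀ x : V, (G.neighborFinset x).card = 5 := fun x => by
    rw [G.card_neighborFinset_eq_degree, hreg]
  have hNadj : ∀ x ∈ N, G.Adj v x := fun x hx => by
    rw [hN, SimpleGraph.mem_neighborFinset] at hx; exact hx
  have hNmem : ∀ x, x ∈ N ↔ G.Adj v x := fun x =>
    ⟨fun h => hNadj x h, fun h => by rw [hN, SimpleGraph.mem_neighborFinset]; exact h⟩
  have hNind : ∀ x ∈ N, ∀ y ∈ N, ¬ G.Adj x y := by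
    intro x hx y hy hxy
    exact htri x y v hxy (hNadj x hx).symm (hNadj y hy).symm
  set M := univ.filter (fun w => w ≠ v ∧ ¬ G.Adj v w ∧ 4 ≤ (commonNbrs G v w).card) with hM
  have hMmem : ∀ w, w ∈ M ↔ (w ≠ v ∧ ¬ G.Adj v w ∧ 4 ≤ (commonNbrs G v w).card) := by
    intro w; simp [hM]
  have hvnotN : v ∉ N := by
    rw [hNmem]; exact G.irrefl
  have hNM : ∀ x ∈ N, x ∉ M := fun x hx hxM => ((hMmem x).1 hxM).2.1 (hNadj x hx)
  have hvM : v ∉ M := fun h => ((hMmem v).1 h).1 rfl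
  have hcommon_v : ∀ w, commonNbrs G v w = N.filter (fun t => G.Adj w t) := by
    intro w
    ext t
    simp only [mem_commonNbrs, Finset.mem_filter, hNmem]
  have hxnbr : ∀ x ∈ N, ∀ y, G.Adj x y → y = v ∨ y ∈ M := by
    intro x hx y hxy
    by_cases hyv : y = v
    · exact Or.inl hyv
    right
    have hvy : ¬ G.Adj v y := by
      intro h
      exact hNind x hx y ((hNmem y).2 h) hxy
    have hxcm : x ∈ commonNbrs G v y := (mem_commonNbrs G).2 ⟨hNadj x hx, hxy.symm⟩
    rcases hP v y (fun hh => hyv hh.symm) hvy with h | h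
    · exact absurd h (Finset.card_ne_zero_of_mem hxcm)
    · exact (hMmem y).2 ⟨hyv, hvy, h⟩
  have hxM4 : ∀ x ∈ N, (M.filter (fun w => G.Adj x w)).card = 4 := by
    intro x hx
    have hNx : G.neighborFinset x = insert v (M.filter (fun w => G.Adj x w)) := by
      ext y
      simp only [SimpleGraph.mem_neighborFinset, Finset.mem_insert, Finset.mem_filter]
      constructor
      · intro h
        rcases hxnbr x hx y h with rfl | hyM
        · exact Or.inl rfl
        · exact Or.inr ⟨hyM, h⟩
      · rintro (rfl | ⟨_, h⟩)
        · exact (hNadj x hx).symm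
        · exact h
    have hvnot : v ∉ M.filter (fun w => G.Adj x w) := fun h => hvM (Finset.mem_filter.1 h).1
    have h5 := hNdeg x
    rw [hNx, Finset.card_insert_of_notMem hvnot] at h5
    omega
  have hdouble : ∑ w ∈ M, (N.filter (fun t => G.Adj w t)).card
      = ∑ x ∈ N, (M.filter (fun w => G.Adj x w)).card := by
    simp only [Finset.card_filter]
    rw [Finset.sum_comm]
    refine Finset.sum_congr rfl fun x _ => Finset.sum_congr rfl fun w _ => ?_
    by_cases h : G.Adj w x
    · rw [if_pos h, if_pos h.symm]
    · rw [if_neg h, if_neg fun h' => h h'.symm]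
  have hsum20 : ∑ w ∈ M, (N.filter (fun t => G.Adj w t)).card = 20 := by
    rw [hdouble, Finset.sum_congr rfl hxM4, Finset.sum_const, hN5]
    simp
  have hM4 : ∀ w ∈ M, 4 ≤ (N.filter (fun t => G.Adj w t)).card := by
    intro w hw
    have h := ((hMmem w).1 hw).2.2
    rwa [hcommon_v w] at h
  have hMle : M.card ≤ 5 := by
    by_contra h
    push_neg at h
    have h4 : 4 * M.card ≤ 20 := by
      calc 4 * M.card = ∑ _w ∈ M, 4 := by rw [Finset.sum_const]; ring
      _ ≤ ∑ w ∈ M, (N.filter (fun t => G.Adj w t)).card := Finset.sum_le_sum hM4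
      _ = 20 := hsum20
    omega
  have hdisj : Disjoint N M := Finset.disjoint_left.2 (fun {x} hx => hNM x hx)
  have hMge : 5 ≤ M.card := by
    have hvNM : v ∉ N ∪ M := by
      rw [Finset.mem_union]; rintro (h | h); exacts [hvnotN h, hvM h]
    have hXcard : (insert v (N ∪ M)).card = 6 + M.card := by
      rw [Finset.card_insert_of_notMem hvNM, Finset.card_union_of_disjoint hdisj, hN5]
      omega
    have h2e := two_mul_edgesWithin G (insert v (N ∪ M))
    rw [Finset.sum_insert hvNM, Finset.sum_union hdisj] at h2e
    have hrowv : 5 ≤ ((insert v (N ∪ M)).filter (G.Adj v)).card := by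
      apply le_trans _ (row_ge G (S := N) ?_)
      · omega
      · intro y hy
        exact ⟨Finset.mem_insert_of_mem (Finset.mem_union_left _ hy), hNadj y hy⟩
    have hrowN : ∀ x ∈ N, 5 ≤ ((insert v (N ∪ M)).filter (G.Adj x)).card := by
      intro x hx
      apply le_trans _ (row_ge G (S := G.neighborFinset x) ?_)
      · rw [hNdeg x]
      · intro y hy
        have hadj : G.Adj x y := (SimpleGraph.mem_neighborFinset _ _ _).1 hy
        refine ⟨?_, hadj⟩
        rcases hxnbr x hx y hadj with rfl | hyM
        · exact Finset.mem_insert_self _ _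
        · exact Finset.mem_insert_of_mem (Finset.mem_union_right _ hyM)
    have hrowM : ∀ w ∈ M, (N.filter (fun t => G.Adj w t)).card
        ≤ ((insert v (N ∪ M)).filter (G.Adj w)).card := by
      intro w _
      apply Finset.card_le_card
      intro t ht
      obtain ⟨htN, hadj⟩ := Finset.mem_filter.1 ht
      exact Finset.mem_filter.2 ⟨Finset.mem_insert_of_mem (Finset.mem_union_left _ htN), hadj⟩
    have hNsum : 25 ≤ ∑ x ∈ N, ((insert v (N ∪ M)).filter (G.Adj x)).card := by
      calc (25:ℕ) = ∑ _x ∈ N, 5 := by rw [Finset.sum_const, hN5]; simp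
      _ ≤ _ := Finset.sum_le_sum hrowN
    have hMsum : 20 ≤ ∑ w ∈ M, ((insert v (N ∪ M)).filter (G.Adj w)).card := by
      rw [← hsum20]; exact Finset.sum_le_sum hrowM
    have hsparse := hsp (insert v (N ∪ M)) (by omega)
    omega
  have hM5 : M.card = 5 := le_antisymm hMle hMge
  have hM4e : ∀ w ∈ M, (N.filter (fun t => G.Adj w t)).card = 4 := by
    intro w hw
    by_contra hne
    have h5 : 5 ≤ (N.filter (fun t => G.Adj w t)).card := by
      have := hM4 w hw; omega
    have hge : 21 ≤ ∑ w' ∈ M, (N.filter (fun t => G.Adj w' t)).card := by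
      rw [← Finset.add_sum_erase M _ hw]
      have h16 : 16 ≤ ∑ w' ∈ M.erase w, (N.filter (fun t => G.Adj w' t)).card := by
        calc (16:ℕ) = ∑ _w ∈ M.erase w, 4 := by
              rw [Finset.sum_const, Finset.card_erase_of_mem hw, hM5]
              simp
        _ ≤ _ := Finset.sum_le_sum (fun w' hw' => hM4 w' (Finset.mem_of_mem_erase hw'))
      omega
    omega
  have hMind : ∀ w ∈ M, ∀ w' ∈ M, ¬ G.Adj w w' := by
    intro w hw w' hw' hadj
    have hc : ((N.filter (fun t => G.Adj w t)) ∩ (N.filter (fun t => G.Adj w' t))).Nonempty := by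
      by_contra h
      rw [Finset.not_nonempty_iff_eq_empty] at h
      have hcu := Finset.card_union_of_disjoint (Finset.disjoint_iff_inter_eq_empty.2 h)
      have hsub : (N.filter (fun t => G.Adj w t)) ∪ (N.filter (fun t => G.Adj w' t)) ⊆ N :=
        Finset.union_subset (Finset.filter_subset _ _) (Finset.filter_subset _ _)
      have hle := Finset.card_le_card hsub
      rw [hcu, hM4e w hw, hM4e w' hw', hN5] at hle
      omega
    obtain ⟨t, ht⟩ := hc
    rw [Finset.mem_inter, Finset.mem_filter, Finset.mem_filter] at ht
    exact htri w w' t hadj ht.1.2 ht.2.2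
  -- unique missed partner counts
  have hmiss_x : ∀ x ∈ N, (M.filter (fun w => ¬ G.Adj x w)).card = 1 := by
    intro x hx
    have h := Finset.card_filter_add_card_filter_not (s := M) (p := fun w => G.Adj x w)
    rw [hxM4 x hx, hM5] at h
    omega
  have hmiss_w : ∀ w ∈ M, (N.filter (fun t => ¬ G.Adj w t)).card = 1 := by
    intro w hw
    have h := Finset.card_filter_add_card_filter_not (s := N) (p := fun t => G.Adj w t)
    rw [hM4e w hw, hN5] at h
    omega
  -- the fifth neighbour of each w ∈ M lies outside N, and is unique
  have hzcard : ∀ w ∈ M, (G.neighborFinset w \ N).card = 1 := by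
    intro w hw
    have hinter : (G.neighborFinset w ∩ N).card = 4 := by
      rw [← hM4e w hw]
      congr 1
      ext t
      simp only [Finset.mem_inter, Finset.mem_filter, SimpleGraph.mem_neighborFinset]
      tauto
    have h := Finset.card_sdiff_add_card_inter (G.neighborFinset w) N
    rw [hinter, hNdeg w] at h
    omega
  -- any two distinct members of M have the same outside-neighbour
  have hzsame : ∀ w ∈ M, ∀ w' ∈ M, w ≠ w' → ∀ t t' : V,
      G.neighborFinset w \ N = {t} → G.neighborFinset w' \ N = {t'} → t = t' := by
    intro w hw w' hw' hne t t' ht ht'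
    have hnadj : ¬ G.Adj w w' := hMind w hw w' hw'
    -- common neighbour in N exists
    have hcn : ((N.filter (fun s => G.Adj w s)) ∩ (N.filter (fun s => G.Adj w' s))).Nonempty := by
      by_contra h
      rw [Finset.not_nonempty_iff_eq_empty] at h
      have hcu := Finset.card_union_of_disjoint (Finset.disjoint_iff_inter_eq_empty.2 h)
      have hsub : (N.filter (fun s => G.Adj w s)) ∪ (N.filter (fun s => G.Adj w' s)) ⊆ N :=
        Finset.union_subset (Finset.filter_subset _ _) (Finset.filter_subset _ _)
      have hle := Finset.card_le_card hsub
      rw [hcu, hM4e w hw, hM4e w' hw', hN5] at hle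
      omega
    obtain ⟨s0, hs0⟩ := hcn
    rw [Finset.mem_inter, Finset.mem_filter, Finset.mem_filter] at hs0
    have hs0c : s0 ∈ commonNbrs G w w' := (mem_commonNbrs G).2 ⟨hs0.1.2, hs0.2.2⟩
    have hc4 : 4 ≤ (commonNbrs G w w').card := by
      rcases hP w w' hne hnadj with h | h
      · exact absurd h (Finset.card_ne_zero_of_mem hs0c)
      · exact h
    -- the missed vertices of w and w' in N are distinct
    obtain ⟨xw, hxw⟩ := Finset.card_eq_one.1 (hmiss_w w hw)
    obtain ⟨xw', hxw'⟩ := Finset.card_eq_one.1 (hmiss_w w' hw')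
    have hxwmem : xw ∈ N ∧ ¬ G.Adj w xw := by
      have : xw ∈ N.filter (fun t => ¬ G.Adj w t) := by rw [hxw]; simp
      exact Finset.mem_filter.1 this
    have hxw'mem : xw' ∈ N ∧ ¬ G.Adj w' xw' := by
      have : xw' ∈ N.filter (fun t => ¬ G.Adj w' t) := by rw [hxw']; simp
      exact Finset.mem_filter.1 this
    have hxwne : xw ≠ xw' := by
      intro heq
      have h1 : w ∈ M.filter (fun w'' => ¬ G.Adj xw w'') :=
        Finset.mem_filter.2 ⟨hw, fun h => hxwmem.2 h.symm⟩
      have h2 : w' ∈ M.filter (fun w'' => ¬ G.Adj xw w'') :=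
        Finset.mem_filter.2 ⟨hw', fun h => hxw'mem.2 (heq ▸ h.symm)⟩
      exact hne (Finset.card_le_one.1 (le_of_eq (hmiss_x xw hxwmem.1)) w h1 w' h2)
    -- common ∩ N is small
    have hcsub : commonNbrs G w w' ∩ N ⊆ (N.erase xw).erase xw' := by
      intro s hs
      rw [Finset.mem_inter] at hs
      obtain ⟨hadjw, hadjw'⟩ := (mem_commonNbrs G).1 hs.1
      refine Finset.mem_erase.2 ⟨?_, Finset.mem_erase.2 ⟨?_, hs.2⟩⟩
      · intro heq; exact hxw'mem.2 (heq ▸ hadjw')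
      · intro heq; exact hxwmem.2 (heq ▸ hadjw)
    have hcN3 : (commonNbrs G w w' ∩ N).card ≤ 3 := by
      refine le_trans (Finset.card_le_card hcsub) (le_of_eq ?_)
      rw [Finset.card_erase_of_mem (Finset.mem_erase.2 ⟨hxwne.symm, hxw'mem.1⟩),
        Finset.card_erase_of_mem hxwmem.1, hN5]
    -- so some common neighbour lies outside N
    have hex : ∃ s, s ∈ commonNbrs G w w' ∧ s ∉ N := by
      by_contra h
      push_neg at h
      have : commonNbrs G w w' ⊆ commonNbrs G w w' ∩ N :=
        fun s hs => Finset.mem_inter.2 ⟨hs, h s hs⟩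
      have := Finset.card_le_card this
      omega
    obtain ⟨s, hsc, hsN⟩ := hex
    obtain ⟨hadjw, hadjw'⟩ := (mem_commonNbrs G).1 hsc
    have hst : s = t := by
      have : s ∈ G.neighborFinset w \ N := by
        rw [Finset.mem_sdiff, SimpleGraph.mem_neighborFinset]
        exact ⟨hadjw, hsN⟩
      rw [ht] at this
      simpa using this
    have hst' : s = t' := by
      have : s ∈ G.neighborFinset w' \ N := by
        rw [Finset.mem_sdiff, SimpleGraph.mem_neighborFinset]
        exact ⟨hadjw', hsN⟩
      rw [ht'] at this
      simpa using this
    rw [← hst, ← hst']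
  -- pick z
  have hMne : M.Nonempty := by rw [← Finset.card_pos, hM5]; omega
  obtain ⟨w0, hw0⟩ := hMne
  obtain ⟨z, hz0⟩ := Finset.card_eq_one.1 (hzcard w0 hw0)
  have hzall : ∀ w ∈ M, G.neighborFinset w \ N = {z} := by
    intro w hw
    obtain ⟨z', hz'⟩ := Finset.card_eq_one.1 (hzcard w hw)
    by_cases hww0 : w = w0
    · rw [← hww0] at hz0; exact hz0
    · rw [hz', hzsame w hw w0 hw0 hww0 z' z hz' hz0]
  have hzadj : ∀ w ∈ M, G.Adj w z := by
    intro w hw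
    have : z ∈ G.neighborFinset w \ N := by rw [hzall w hw]; simp
    exact (SimpleGraph.mem_neighborFinset _ _ _).1 (Finset.mem_sdiff.1 this).1
  have hznotN : z ∉ N := by
    have : z ∈ G.neighborFinset w0 \ N := by rw [hzall w0 hw0]; simp
    exact (Finset.mem_sdiff.1 this).2
  have hzv : z ≠ v := by
    intro h
    exact ((hMmem w0).1 hw0).2.1 ((h ▸ hzadj w0 hw0).symm)
  have hznotM : z ∉ M := fun h => G.irrefl (hzadj z h)
  have hNz : G.neighborFinset z = M := by
    refine (Finset.eq_of_subset_of_card_le ?_ ?_).symm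
    · intro w hw
      rw [SimpleGraph.mem_neighborFinset]
      exact (hzadj w hw).symm
    · rw [hNdeg z, hM5]
  have hzadj' : ∀ y, G.Adj z y ↔ y ∈ M := by
    intro y
    rw [← hNz, SimpleGraph.mem_neighborFinset]
  have hclassify : ∀ y : V, y = v ∨ y = z ∨ y ∈ N ∨ y ∈ M := by
    have hstep : ∀ x y : V, (x = v ∨ x = z ∨ x ∈ N ∨ x ∈ M) → G.Adj x y →
        (y = v ∨ y = z ∨ y ∈ N ∨ y ∈ M) := by
      rintro x y (rfl | rfl | hx | hx) hadj
      · exact Or.inr (Or.inr (Or.inl ((hNmem y).2 hadj)))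
      · exact Or.inr (Or.inr (Or.inr ((hzadj' y).1 hadj)))
      · rcases hxnbr x hx y hadj with rfl | h
        · exact Or.inl rfl
        · exact Or.inr (Or.inr (Or.inr h))
      · by_cases hyN : y ∈ N
        · exact Or.inr (Or.inr (Or.inl hyN))
        · have hy : y ∈ G.neighborFinset x \ N :=
            Finset.mem_sdiff.2 ⟨(SimpleGraph.mem_neighborFinset _ _ _).2 hadj, hyN⟩
          rw [hzall x hx] at hy
          exact Or.inr (Or.inl (Finset.mem_singleton.1 hy))
    have hwalk : ∀ x y : V, G.Walk x y → (x = v ∨ x = z ∨ x ∈ N ∨ x ∈ M) →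
        (y = v ∨ y = z ∨ y ∈ N ∨ y ∈ M) := by
      intro x y p
      induction p with
      | nil => exact id
      | cons h p ih => exact fun hx => ih (hstep _ _ hx h)
    intro y
    obtain ⟨p⟩ := hconn.preconnected v y
    exact hwalk v y p (Or.inl rfl)
  have hvz : v ≠ z := fun h => hzv h.symm
  have hcardV : Fintype.card V = 12 := by
    have huniv : (Finset.univ : Finset V) = insert v (insert z (N ∪ M)) := by
      symm
      apply Finset.eq_univ_iff_forall.2
      intro y
      rcases hclassify y with rfl | rfl | h | h
      · simp
      · simp
      · simp [Finset.mem_insert, Finset.mem_union, h]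
      · simp [Finset.mem_insert, Finset.mem_union, h]
    rw [← Finset.card_univ, huniv,
      Finset.card_insert_of_notMem (by
        simp only [Finset.mem_insert, Finset.mem_union]
        push_neg
        exact ⟨hvz, hvnotN, hvM⟩),
      Finset.card_insert_of_notMem (by
        simp only [Finset.mem_union]
        push_neg
        exact ⟨hznotN, hznotM⟩),
      Finset.card_union_of_disjoint hdisj, hN5, hM5]
  -- the two matching functions
  set xm : V → V := fun w =>
    if h : (N.filter (fun t => ¬ G.Adj w t)).Nonempty then h.choose else v with hxmdef
  have hxm_spec : ∀ w ∈ M, xm w ∈ N ∧ ¬ G.Adj w (xm w) := by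
    intro w hw
    have hne : (N.filter (fun t => ¬ G.Adj w t)).Nonempty := by
      rw [← Finset.card_pos, hmiss_w w hw]; omega
    have hmem := hne.choose_spec
    rw [Finset.mem_filter] at hmem
    rw [hxmdef]
    simp only [dif_pos hne]
    exact hmem
  have hxm_uniq : ∀ w ∈ M, ∀ t ∈ N, ¬ G.Adj w t → t = xm w := by
    intro w hw t ht hnadj
    have h1 : t ∈ N.filter (fun t => ¬ G.Adj w t) := Finset.mem_filter.2 ⟨ht, hnadj⟩
    have h2 : xm w ∈ N.filter (fun t => ¬ G.Adj w t) :=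
      Finset.mem_filter.2 ⟨(hxm_spec w hw).1, (hxm_spec w hw).2⟩
    exact Finset.card_le_one.1 (le_of_eq (hmiss_w w hw)) t h1 (xm w) h2
  set nu : V → V := fun x =>
    if h : (M.filter (fun w => ¬ G.Adj x w)).Nonempty then h.choose else v with hnudef
  have hnu_spec : ∀ x ∈ N, nu x ∈ M ∧ ¬ G.Adj x (nu x) := by
    intro x hx
    have hne : (M.filter (fun w => ¬ G.Adj x w)).Nonempty := by
      rw [← Finset.card_pos, hmiss_x x hx]; omega
    have hmem := hne.choose_spec
    rw [Finset.mem_filter] at hmem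
    rw [hnudef]
    simp only [dif_pos hne]
    exact hmem
  have hnu_uniq : ∀ x ∈ N, ∀ w ∈ M, ¬ G.Adj x w → w = nu x := by
    intro x hx w hw hnadj
    have h1 : w ∈ M.filter (fun w => ¬ G.Adj x w) := Finset.mem_filter.2 ⟨hw, hnadj⟩
    have h2 : nu x ∈ M.filter (fun w => ¬ G.Adj x w) :=
      Finset.mem_filter.2 ⟨(hnu_spec x hx).1, (hnu_spec x hx).2⟩
    exact Finset.card_le_one.1 (le_of_eq (hmiss_x x hx)) w h1 (nu x) h2
  have hxm_nu : ∀ x ∈ N, xm (nu x) = x := by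
    intro x hx
    have hs := hnu_spec x hx
    exact (hxm_uniq (nu x) hs.1 x hx (fun h => hs.2 h.symm)).symm
  have hadjMN : ∀ w ∈ M, ∀ x ∈ N, (G.Adj w x ↔ w ≠ nu x) := by
    intro w hw x hx
    constructor
    · intro h heq
      exact (hnu_spec x hx).2 (heq ▸ h.symm)
    · intro hne
      by_contra h
      exact hne (hnu_uniq x hx w hw (fun h' => h h'.symm))
  -- the isomorphism
  let eM : {w // w ∈ M} ≃ Fin 5 := M.equivFinOfCardEq hM5
  set f : V → Fin 2 × Fin 6 := fun y =>
    if y = v then ((0 : Fin 2), (0 : Fin 6))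
    else if y = z then (1, 0)
    else if h : y ∈ M then (0, (eM ⟨y, h⟩).succ)
    else if h : y ∈ N then (1, (eM ⟨nu y, (hnu_spec y h).1⟩).succ)
    else (0, 0) with hf
  have hfv : f v = (0, 0) := by rw [hf]; simp
  have hfz : f z = (1, 0) := by rw [hf]; simp [hzv]
  have hfM : ∀ w (hw : w ∈ M), f w = (0, (eM ⟨w, hw⟩).succ) := by
    intro w hw
    have h1 : w ≠ v := fun h => hvM (h ▸ hw)
    have h2 : w ≠ z := fun h => hznotM (h ▸ hw)
    rw [hf]
    simp only [if_neg h1, if_neg h2, dif_pos hw]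
  have hfN : ∀ x (hx : x ∈ N), f x = (1, (eM ⟨nu x, (hnu_spec x hx).1⟩).succ) := by
    intro x hx
    have h1 : x ≠ v := fun h => hvnotN (h ▸ hx)
    have h2 : x ≠ z := fun h => hznotN (h ▸ hx)
    rw [hf]
    simp only [if_neg h1, if_neg h2, dif_neg (hNM x hx), dif_pos hx]
  have hsucc_inj : ∀ (i j : Fin 5), i.succ = j.succ → i = j := fun i j h =>
    Fin.succ_injective _ h
  have heM_inj : ∀ (w : V) (hw : w ∈ M) (w' : V) (hw' : w' ∈ M),
      eM ⟨w, hw⟩ = eM ⟨w', hw'⟩ → w = w' := by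
    intro w hw w' hw' h
    exact Subtype.mk_eq_mk.1 (eM.injective h)
  have hinj : Function.Injective f := by
    intro y y' heq
    rcases hclassify y with rfl | rfl | hy | hy <;>
      rcases hclassify y' with rfl | rfl | hy' | hy'
    · rfl
    · rw [hfv, hfz] at heq
      injection heq with h1 h2
      exact absurd h1 (by decide)
    · rw [hfv, hfN y' hy'] at heq
      injection heq with h1 h2
      exact absurd h1 (by decide)
    · rw [hfv, hfM y' hy'] at heq
      injection heq with h1 h2
      exact absurd h2.symm (Fin.succ_ne_zero _)
    · rw [hfz, hfv] at heq
      injection heq with h1 h2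
      exact absurd h1 (by decide)
    · rfl
    · rw [hfz, hfN y' hy'] at heq
      injection heq with h1 h2
      exact absurd h2.symm (Fin.succ_ne_zero _)
    · rw [hfz, hfM y' hy'] at heq
      injection heq with h1 h2
      exact absurd h1 (by decide)
    · rw [hfN y hy, hfv] at heq
      injection heq with h1 h2
      exact absurd h1 (by decide)
    · rw [hfN y hy, hfz] at heq
      injection heq with h1 h2
      exact absurd h2 (Fin.succ_ne_zero _)
    · rw [hfN y hy, hfN y' hy'] at heq
      injection heq with h1 h2
      have h3 := heM_inj _ _ _ _ (hsucc_inj _ _ h2)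
      rw [← hxm_nu y hy, ← hxm_nu y' hy', h3]
    · rw [hfN y hy, hfM y' hy'] at heq
      injection heq with h1 h2
      exact absurd h1 (by decide)
    · rw [hfM y hy, hfv] at heq
      injection heq with h1 h2
      exact absurd h2 (Fin.succ_ne_zero _)
    · rw [hfM y hy, hfz] at heq
      injection heq with h1 h2
      exact absurd h1 (by decide)
    · rw [hfM y hy, hfN y' hy'] at heq
      injection heq with h1 h2
      exact absurd h1 (by decide)
    · rw [hfM y hy, hfM y' hy'] at heq
      injection heq with h1 h2
      exact heM_inj _ _ _ _ (hsucc_inj _ _ h2)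
  have hbij : Function.Bijective f := by
    refine (Fintype.bijective_iff_injective_and_card f).2 ⟨hinj, ?_⟩
    rw [hcardV]
    simp
  have hK' : ∀ (s t : Fin 2) (i j : Fin 6),
      K66minus.Adj (s, i) (t, j) ↔ (s ≠ t ∧ i ≠ j) := fun _ _ _ _ => Iff.rfl
  have hadj_vz : ¬ G.Adj v z := fun h => hznotN ((hNmem z).2 h)
  have hadj_zN : ∀ x ∈ N, ¬ G.Adj z x := by
    intro x hx h
    exact hNM x hx ((hzadj' x).1 h)
  have hiff : ∀ a b : V, K66minus.Adj (f a) (f b) ↔ G.Adj a b := by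
    intro a b
    rcases hclassify a with rfl | rfl | ha | ha <;>
      rcases hclassify b with rfl | rfl | hb | hb
    · rw [hfv, hK']
      simp [G.irrefl]
    · rw [hfv, hfz, hK']
      simp [hadj_vz]
    · rw [hfv, hfN b hb, hK']
      constructor
      · intro _; exact hNadj b hb
      · intro _; exact ⟨by decide, fun h => (Fin.succ_ne_zero _) h.symm⟩
    · rw [hfv, hfM b hb, hK']
      constructor
      · rintro ⟨h, -⟩; exact absurd rfl h
      · intro h; exact absurd h ((hMmem b).1 hb).2.1
    · rw [hfz, hfv, hK']
      constructor
      · rintro ⟨-, h⟩; exact absurd rfl h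
      · intro h; exact absurd h.symm hadj_vz
    · rw [hfz, hK']
      simp [G.irrefl]
    · rw [hfz, hfN b hb, hK']
      constructor
      · rintro ⟨h, -⟩; exact absurd rfl h
      · intro h; exact absurd h (hadj_zN b hb)
    · rw [hfz, hfM b hb, hK']
      constructor
      · intro _; exact ((hzadj' b).2 hb)
      · intro _; exact ⟨by decide, fun h => (Fin.succ_ne_zero _) h.symm⟩
    · rw [hfN a ha, hfv, hK']
      constructor
      · intro _; exact (hNadj a ha).symm
      · intro _; exact ⟨by decide, Fin.succ_ne_zero _⟩
    · rw [hfN a ha, hfz, hK']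
      constructor
      · rintro ⟨h, -⟩; exact absurd rfl h
      · intro h; exact absurd h.symm (hadj_zN a ha)
    · rw [hfN a ha, hfN b hb, hK']
      constructor
      · rintro ⟨h, -⟩; exact absurd rfl h
      · intro h; exact absurd h (hNind a ha b hb)
    · rw [hfN a ha, hfM b hb, hK']
      constructor
      · rintro ⟨-, h⟩
        refine ((hadjMN b hb a ha).2 ?_).symm
        intro heq
        exact h (congrArg (fun p : {w // w ∈ M} => (eM p).succ) (Subtype.ext heq.symm))
      · intro h
        refine ⟨by decide, fun heq => ?_⟩
        exact (hadjMN b hb a ha).1 h.symm (heM_inj _ _ _ _ (hsucc_inj _ _ heq.symm))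
    · rw [hfM a ha, hfv, hK']
      constructor
      · rintro ⟨h, -⟩; exact absurd rfl h
      · intro h; exact absurd h.symm ((hMmem a).1 ha).2.1
    · rw [hfM a ha, hfz, hK']
      constructor
      · intro _; exact ((hzadj' a).2 ha).symm
      · intro _; exact ⟨by decide, Fin.succ_ne_zero _⟩
    · rw [hfM a ha, hfN b hb, hK']
      constructor
      · rintro ⟨-, h⟩
        refine (hadjMN a ha b hb).2 ?_
        intro heq
        exact h (congrArg (fun p : {w // w ∈ M} => (eM p).succ) (Subtype.ext heq))
      · intro h
        refine ⟨by decide, fun heq => ?_⟩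
        exact (hadjMN a ha b hb).1 h (heM_inj _ _ _ _ (hsucc_inj _ _ heq))
    · rw [hfM a ha, hfM b hb, hK']
      constructor
      · rintro ⟨h, -⟩; exact absurd rfl h
      · intro h; exact absurd h (hMind a ha b hb)
  exact ⟨⟨Equiv.ofBijective f hbij, fun {a b} => hiff a b⟩⟩

end Aux

theorem stmt13 (G : SimpleGraph V) [DecidableRel G.Adj]
    (hconn : G.Connected) (hreg : ∀ v, G.degree v = 5) (hsp : Sparse3 G)
    (hniso : ¬ Nonempty (G ≃g K66minus)) :
    (∃ u v : V, G.Adj u v ∧ 1 ≤ (commonNbrs G u v).card ∧ (commonNbrs G u v).card ≤ 2) ∨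
    (∃ u v : V, u ≠ v ∧ ¬ G.Adj u v ∧ 1 ≤ (commonNbrs G u v).card ∧ (commonNbrs G u v).card ≤ 3) := by
  classical
  by_contra hcon
  push_neg at hcon
  obtain ⟨hE', hP'⟩ := hcon
  have hE : ∀ x y, G.Adj x y → (commonNbrs G x y).card = 0 ∨ 3 ≤ (commonNbrs G x y).card := by
    intro x y h
    have := hE' x y h
    omega
  have hP : ∀ x y, x ≠ y → ¬ G.Adj x y →
      (commonNbrs G x y).card = 0 ∨ 4 ≤ (commonNbrs G x y).card := by
    intro x y hne hnadj
    have := hP' x y hne hnadj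
    omega
  have htf : ∀ x y, G.Adj x y → (commonNbrs G x y).card = 0 := by
    intro x y h
    rcases hE x y h with h0 | h3
    · exact h0
    exfalso
    have hymem : y ∈ G.neighborFinset x := (SimpleGraph.mem_neighborFinset _ _ _).2 h
    have hsubc : commonNbrs G x y ⊆ (G.neighborFinset x).erase y := by
      intro t ht
      obtain ⟨h1, h2⟩ := (Aux.mem_commonNbrs G).1 ht
      refine Finset.mem_erase.2 ⟨?_, (SimpleGraph.mem_neighborFinset _ _ _).2 h1⟩
      intro heq
      exact G.irrefl (heq ▸ h2)
    have hle : (commonNbrs G x y).card ≤ 4 := by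
      refine le_trans (Finset.card_le_card hsubc) ?_
      rw [Finset.card_erase_of_mem hymem, G.card_neighborFinset_eq_degree, hreg]
    rcases (by omega : (commonNbrs G x y).card = 3 ∨ (commonNbrs G x y).card = 4) with hc | hc
    · exact Aux.caseB3 G hreg hsp hE hP h hc
    · exact Aux.caseB4 G hreg hsp hE h hc
  exact hniso (Aux.caseA G hconn hreg hsp htf hP)
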